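/- For every even integer i ≥ 2, the moment m_i := Σ_{u=(u₁,u₂) ∈ Z²} u₁^i · p_u satisfies 0 < m_i ≤ Σ_{k=1}^∞ k^i (1−p)^{1+2k(k−1)}(1 − (1−p)^{4k}) < ∞, where p_u is the step distribution defined below. -/

import Mathlib

/-- The step distribution of the drainage-network random walk on `ℤ²` with openness
parameter `p`: mass `p` at the origin, and for `u` with `‖u‖₁ = k ≥ 1`, mass
`(1-p)^(#D_{k-1}) (1 - (1-p)^(#δD_k)) / #δD_k`, where `#D_{k-1} = 1 + 2k(k-1)` and
`#δD_k = 4k`. -/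
noncomputable def pstep (p : ℝ) (u : ℤ × ℤ) : ℝ :=
  if u.1.natAbs + u.2.natAbs = 0 then p
  else (1 - p) ^ (1 + 2 * (u.1.natAbs + u.2.natAbs) * (u.1.natAbs + u.2.natAbs - 1)) *
    (1 - (1 - p) ^ (4 * (u.1.natAbs + u.2.natAbs))) / (4 * (u.1.natAbs + u.2.natAbs))

namespace MomAux

/-- parametrization of the ℓ¹ sphere of radius j+1 in ℤ² -/
def psi : (Σ j : ℕ, Fin 4 × Fin (j+1)) → ℤ × ℤ
  | ⟨j, ⟨q, _⟩, ⟨t, _⟩⟩ =>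
    if q = 0 then ((j:ℤ)+1-t, t)
    else if q = 1 then (-(t:ℤ), (j:ℤ)+1-t)
    else if q = 2 then (-((j:ℤ)+1-t), -(t:ℤ))
    else ((t:ℤ), -((j:ℤ)+1-t))

lemma psi_spec (x : Σ j : ℕ, Fin 4 × Fin (j+1)) :
    (psi x).1.natAbs + (psi x).2.natAbs = x.1 + 1 := by
  obtain ⟨j, ⟨q, hq⟩, ⟨t, ht⟩⟩ := x
  simp only [psi]
  split_ifs <;> simp only [] <;> omega

lemma psi_inj : Function.Injective psi := by
  rintro ⟨j, ⟨q, hq⟩, ⟨t, ht⟩⟩ ⟨j', ⟨q', hq'⟩, ⟨t', ht'⟩⟩ h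
  have e1 := psi_spec ⟨j, ⟨q, hq⟩, ⟨t, ht⟩⟩
  have e2 := psi_spec ⟨j', ⟨q', hq'⟩, ⟨t', ht'⟩⟩
  rw [h] at e1
  simp only at e1 e2
  have hj : j = j' := by omega
  subst hj
  simp only [psi] at h
  split_ifs at h <;>
    simp only [Prod.mk.injEq] at h <;>
    obtain ⟨h1, h2⟩ := h <;>
    (refine congrArg (fun z => (⟨j, z⟩ : Σ j : ℕ, Fin 4 × Fin (j+1))) (Prod.ext ?_ ?_)) <;>
    (apply Fin.ext) <;> simp only [] <;> omega

lemma psi_surj (u : ℤ × ℤ) (hu : u ≠ (0, 0)) : ∃ x, psi x = u := by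
  obtain ⟨a, b⟩ := u
  have h0 : ¬(a = 0 ∧ b = 0) := by simpa [Prod.ext_iff] using hu
  rcases le_or_gt 1 a with ha | ha
  · rcases le_or_gt 0 b with hb | hb
    · refine ⟨⟨a.natAbs + b.natAbs - 1, ⟨0, by norm_num⟩, ⟨b.natAbs, by omega⟩⟩, ?_⟩
      simp only [psi]
      split_ifs <;> (try contradiction) <;> simp only [Prod.mk.injEq] <;> constructor <;> omega
    · refine ⟨⟨a.natAbs + b.natAbs - 1, ⟨3, by norm_num⟩, ⟨a.natAbs, by omega⟩⟩, ?_⟩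
      simp only [psi]
      split_ifs <;> (try contradiction) <;> simp only [Prod.mk.injEq] <;> constructor <;> omega
  · rcases le_or_gt 1 b with hb | hb
    · refine ⟨⟨a.natAbs + b.natAbs - 1, ⟨1, by norm_num⟩, ⟨a.natAbs, by omega⟩⟩, ?_⟩
      simp only [psi]
      split_ifs <;> (try contradiction) <;> simp only [Prod.mk.injEq] <;> constructor <;> omega
    · rcases lt_or_ge a 0 with ha' | ha'
      · refine ⟨⟨a.natAbs + b.natAbs - 1, ⟨2, by norm_num⟩, ⟨b.natAbs, by omega⟩⟩, ?_⟩
        simp only [psi]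
        split_ifs <;> (try contradiction) <;> simp only [Prod.mk.injEq] <;> constructor <;> omega
      · refine ⟨⟨a.natAbs + b.natAbs - 1, ⟨3, by norm_num⟩, ⟨a.natAbs, by omega⟩⟩, ?_⟩
        simp only [psi]
        split_ifs <;> (try contradiction) <;> simp only [Prod.mk.injEq] <;> constructor <;> omega

lemma pstep_eq (p : ℝ) (u : ℤ × ℤ) (k : ℕ) (hk : u.1.natAbs + u.2.natAbs = k)
    (h : k ≠ 0) :
    pstep p u = (1 - p) ^ (1 + 2 * k * (k - 1)) * (1 - (1 - p) ^ (4 * k)) / ((4 * k : ℕ) : ℝ) := by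
  have hkR : ((u.1.natAbs : ℝ) + (u.2.natAbs : ℝ)) = (k : ℝ) := by exact_mod_cast hk
  rw [pstep, hk, if_neg h, hkR]
  push_cast
  ring

lemma pstep_nonneg {p : ℝ} (hp0 : 0 < p) (hp1 : p < 1) (u : ℤ × ℤ) : 0 ≤ pstep p u := by
  rw [pstep]
  split_ifs with h
  · exact hp0.le
  · have h1 : (0:ℝ) ≤ 1 - p := by linarith
    have h2 : (1 - p) ^ (4 * (u.1.natAbs + u.2.natAbs)) ≤ 1 :=
      pow_le_one₀ h1 (by linarith)
    apply div_nonneg (mul_nonneg (by positivity) (by linarith))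
    positivity

end MomAux


open MomAux in
set_option maxHeartbeats 1000000 in
/-- For every even integer `i ≥ 2`, the moment
`m_i = Σ_{u ∈ ℤ²} u₁^i p_u` satisfies
`0 < m_i ≤ Σ_{k=1}^∞ k^i (1-p)^(1+2k(k-1)) (1 - (1-p)^(4k)) < ∞`.
The sum over `k ≥ 1` is written as a sum over `k = j + 1`, `j ∈ ℕ`, and its
finiteness as summability of the corresponding series. -/
theorem moments_of_step_distribution (p : ℝ) (hp0 : 0 < p) (hp1 : p < 1)
    (i : ℕ) (hi : 2 ≤ i) (hieven : Even i) :
    Summable (fun j : ℕ => ((j : ℝ) + 1) ^ i * (1 - p) ^ (1 + 2 * (j + 1) * j) *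
      (1 - (1 - p) ^ (4 * (j + 1)))) ∧
    0 < ∑' u : ℤ × ℤ, (u.1 : ℝ) ^ i * pstep p u ∧
    ∑' u : ℤ × ℤ, (u.1 : ℝ) ^ i * pstep p u ≤
      ∑' j : ℕ, ((j : ℝ) + 1) ^ i * (1 - p) ^ (1 + 2 * (j + 1) * j) *
        (1 - (1 - p) ^ (4 * (j + 1))) := by
  have hq0 : (0:ℝ) < 1 - p := by linarith
  have hq1 : 1 - p < 1 := by linarith
  set f : ℕ → ℝ := fun j => ((j : ℝ) + 1) ^ i * (1 - p) ^ (1 + 2 * (j + 1) * j) *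
      (1 - (1 - p) ^ (4 * (j + 1))) with hf_def
  set g : ℤ × ℤ → ℝ := fun u => (u.1 : ℝ) ^ i * pstep p u with hg_def
  -- nonnegativity
  have hqpow_le_one : ∀ n : ℕ, (1 - p) ^ n ≤ 1 := fun n => pow_le_one₀ hq0.le hq1.le
  have hf_nonneg : ∀ j, 0 ≤ f j := by
    intro j
    have := hqpow_le_one (4 * (j + 1))
    have h1 : (0:ℝ) ≤ (j:ℝ) + 1 := by positivity
    have h2 : (0:ℝ) ≤ (1 - p) ^ (1 + 2 * (j + 1) * j) := by positivity
    have h3 : (0:ℝ) ≤ 1 - (1 - p) ^ (4 * (j + 1)) := by linarith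
    positivity
  have hg_nonneg : ∀ u, 0 ≤ g u := fun u =>
    mul_nonneg (hieven.pow_nonneg _) (pstep_nonneg hp0 hp1 u)
  -- summability of f
  have hf_sum : Summable f := by
    have hr0 : (0:ℝ) < (1 - p) ^ 2 := by positivity
    have hr1 : (1 - p) ^ 2 < 1 := pow_lt_one₀ hq0.le hq1 (by norm_num)
    have h0 : Summable (fun n : ℕ => (n : ℝ) ^ i * ((1 - p) ^ 2) ^ n) :=
      summable_pow_mul_geometric_of_norm_lt_one i
        (by rw [Real.norm_eq_abs, abs_of_nonneg hr0.le]; exact hr1)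
    have h1 : Summable (fun n : ℕ => ((n + 1 : ℕ) : ℝ) ^ i * ((1 - p) ^ 2) ^ (n + 1)) :=
      (_root_.summable_nat_add_iff 1).2 h0
    have h2 := h1.mul_left (((1 - p) ^ 2)⁻¹)
    have h3 : Summable (fun n : ℕ => ((n : ℝ) + 1) ^ i * ((1 - p) ^ 2) ^ n) := by
      refine h2.congr fun n => ?_
      push_cast
      rw [pow_succ]
      field_simp
      ring
    refine Summable.of_nonneg_of_le hf_nonneg (fun j => ?_) h3
    have e1 : (1 - p) ^ (1 + 2 * (j + 1) * j) ≤ (1 - p) ^ (2 * j) := by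
      apply pow_le_pow_of_le_one hq0.le hq1.le
      have : 2 * j ≤ 2 * (j + 1) * j := by
        calc 2 * j = 2 * j := rfl
        _ ≤ (2 * (j + 1)) * j := Nat.mul_le_mul_right j (by omega)
        _ = 2 * (j + 1) * j := rfl
      omega
    have e2 : 1 - (1 - p) ^ (4 * (j + 1)) ≤ 1 := by
      have : (0:ℝ) ≤ (1 - p) ^ (4 * (j + 1)) := by positivity
      linarith
    have hA : (0:ℝ) ≤ ((j : ℝ) + 1) ^ i := by positivity
    calc f j ≤ ((j : ℝ) + 1) ^ i * (1 - p) ^ (1 + 2 * (j + 1) * j) * 1 := by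
          apply mul_le_mul_of_nonneg_left e2
          positivity
      _ = ((j : ℝ) + 1) ^ i * (1 - p) ^ (1 + 2 * (j + 1) * j) := mul_one _
      _ ≤ ((j : ℝ) + 1) ^ i * (1 - p) ^ (2 * j) := mul_le_mul_of_nonneg_left e1 hA
      _ = ((j : ℝ) + 1) ^ i * ((1 - p) ^ 2) ^ j := by rw [← pow_mul]
  -- the key term bound along psi
  have key : ∀ x : Σ j : ℕ, Fin 4 × Fin (j+1),
      g (psi x) ≤ f x.1 / ((4 * (x.1 + 1) : ℕ) : ℝ) := by
    intro x
    set u := psi x with hu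
    set j := x.1 with hj
    have hk : u.1.natAbs + u.2.natAbs = j + 1 := psi_spec x
    have hps : pstep p u = (1 - p) ^ (1 + 2 * (j + 1) * ((j + 1) - 1)) *
        (1 - (1 - p) ^ (4 * (j + 1))) / ((4 * (j + 1) : ℕ) : ℝ) :=
      pstep_eq p u (j + 1) hk (by omega)
    have habs : |(u.1 : ℝ)| ≤ ((j : ℝ) + 1) := by
      have h1 : u.1.natAbs ≤ j + 1 := by omega
      have h2 : |u.1| ≤ (j : ℤ) + 1 := by
        rw [Int.abs_eq_natAbs]; exact_mod_cast h1
      rw [← Int.cast_abs]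
      exact_mod_cast h2
    have hpow : (u.1 : ℝ) ^ i ≤ ((j : ℝ) + 1) ^ i := by
      rw [← hieven.pow_abs]
      exact pow_le_pow_left₀ (abs_nonneg _) habs i
    have hB : (0:ℝ) ≤ (1 - p) ^ (1 + 2 * (j + 1) * ((j + 1) - 1)) *
        (1 - (1 - p) ^ (4 * (j + 1))) / ((4 * (j + 1) : ℕ) : ℝ) := by
      have := hqpow_le_one (4 * (j + 1))
      have h3 : (0:ℝ) ≤ 1 - (1 - p) ^ (4 * (j + 1)) := by linarith
      positivity
    calc g u = (u.1 : ℝ) ^ i * pstep p u := rfl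
      _ ≤ ((j : ℝ) + 1) ^ i * pstep p u := by
          rw [hps]; exact mul_le_mul_of_nonneg_right hpow hB
      _ = f j / ((4 * (j + 1) : ℕ) : ℝ) := by
          rw [hps, hf_def]
          simp only [Nat.add_sub_cancel]
          ring
  -- inner finite sums
  have hS : ∀ j : ℕ, ∑ c : Fin 4 × Fin (j+1), g (psi ⟨j, c⟩) ≤ f j := by
    intro j
    have hcard : (Finset.univ : Finset (Fin 4 × Fin (j+1))).card = 4 * (j + 1) := by
      simp [Finset.card_univ]
    have hne : ((4 * (j + 1) : ℕ) : ℝ) ≠ 0 := by positivity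
    calc ∑ c : Fin 4 × Fin (j+1), g (psi ⟨j, c⟩)
        ≤ ∑ _c : Fin 4 × Fin (j+1), f j / ((4 * (j + 1) : ℕ) : ℝ) :=
          Finset.sum_le_sum fun c _ => key ⟨j, c⟩
      _ = ((4 * (j + 1) : ℕ) : ℝ) * (f j / ((4 * (j + 1) : ℕ) : ℝ)) := by
          rw [Finset.sum_const, hcard, nsmul_eq_mul]
      _ = f j := by field_simp
  -- summability over the sigma type
  set F : (Σ j : ℕ, Fin 4 × Fin (j+1)) → ℝ := fun x => g (psi x) with hF_def
  have hF_nonneg : ∀ x, 0 ≤ F x := fun x => hg_nonneg _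
  have hFib : ∀ j : ℕ, Summable fun c : Fin 4 × Fin (j+1) => F ⟨j, c⟩ :=
    fun j => Summable.of_finite
  have htsum_fib : ∀ j : ℕ, ∑' c : Fin 4 × Fin (j+1), F ⟨j, c⟩ =
      ∑ c : Fin 4 × Fin (j+1), g (psi ⟨j, c⟩) := fun j => tsum_fintype _
  have hSsum : Summable fun j : ℕ => ∑' c : Fin 4 × Fin (j+1), F ⟨j, c⟩ := by
    refine Summable.of_nonneg_of_le (fun j => tsum_nonneg fun c => hF_nonneg _)
      (fun j => ?_) hf_sum
    rw [htsum_fib j]; exact hS j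
  have hF_sum : Summable F := (summable_sigma_of_nonneg hF_nonneg).mpr ⟨hFib, hSsum⟩
  -- transfer along psi
  have hg0 : ∀ u : ℤ × ℤ, u ∉ Set.range psi → g u = 0 := by
    intro u hu
    have : u = (0, 0) := by
      by_contra h
      exact hu (psi_surj u h)
    rw [this]
    show ((((0:ℤ), (0:ℤ)).1 : ℤ) : ℝ) ^ i * pstep p (0, 0) = 0
    norm_num [zero_pow (show i ≠ 0 by omega)]
  have hg_sum : Summable g := (psi_inj.summable_iff hg0).mp hF_sum
  have htsum_eq : ∑' x, F x = ∑' u, g u := psi_inj.tsum_eq (by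
    intro u hu
    by_contra h
    exact hu (hg0 u h))
  -- the upper bound
  have hle : ∑' u, g u ≤ ∑' j, f j := by
    rw [← htsum_eq, Summable.tsum_sigma hF_sum]
    exact Summable.tsum_le_tsum (fun j => by rw [htsum_fib j]; exact hS j) hSsum hf_sum
  -- positivity
  have hpos : 0 < ∑' u, g u := by
    refine Summable.tsum_pos hg_sum hg_nonneg ((1, 0) : ℤ × ℤ) ?_
    have hps : pstep p ((1, 0) : ℤ × ℤ) = (1 - p) ^ (1 + 2 * 1 * (1 - 1)) *
        (1 - (1 - p) ^ (4 * 1)) / ((4 * 1 : ℕ) : ℝ) := pstep_eq p _ 1 rfl one_ne_zero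
    have h4 : (1 - p) ^ (4 * 1) < 1 := pow_lt_one₀ hq0.le hq1 (by norm_num)
    have : (0:ℝ) < pstep p ((1, 0) : ℤ × ℤ) := by
      rw [hps]
      have h3 : (0:ℝ) < 1 - (1 - p) ^ (4 * 1) := by linarith
      positivity
    simpa [hg_def] using this
  exact ⟨hf_sum, hpos, hle⟩
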